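/- Fix θ ∈ ℝ and δ > 0, and define α(t) := t^{θ + δ sin(ln ln t)} for t > e and α(t) := t^θ for 1 ≤ t ≤ e. Then α belongs to the class RO, with Matuszewska indices σ₀(α) = θ − √2 δ and σ₁(α) = θ + √2 δ. -/

import Mathlib

/-- The class RO of RO-varying functions at infinity. -/
def IsRO (α : ℝ → ℝ) : Prop :=
  Measurable (fun t : Set.Ici (1 : ℝ) => α t.1) ∧
  (∀ t : ℝ, 1 ≤ t → 0 < α t) ∧
  ∃ b : ℝ, 1 < b ∧ ∃ c : ℝ, 1 ≤ c ∧ ∀ t : ℝ, 1 ≤ t → ∀ l : ℝ, 1 ≤ l → l ≤ b →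
    c⁻¹ ≤ α (l * t) / α t ∧ α (l * t) / α t ≤ c

/-- The lower Matuszewska index `σ₀(α)`: the supremum of all `s₀` for which
`c₀ λ^{s₀} ≤ α (λ t) / α t` (for some `c₀ > 0`) for all `t ≥ 1`, `λ ≥ 1`. -/
noncomputable def sigma0 (α : ℝ → ℝ) : ℝ :=
  sSup {s : ℝ | ∃ c : ℝ, 0 < c ∧ ∀ t : ℝ, 1 ≤ t → ∀ l : ℝ, 1 ≤ l →
    c * l ^ s ≤ α (l * t) / α t}

/-- The upper Matuszewska index `σ₁(α)`: the infimum of all `s₁` for which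
`α (λ t) / α t ≤ c₁ λ^{s₁}` (for some `c₁ > 0`) for all `t ≥ 1`, `λ ≥ 1`. -/
noncomputable def sigma1 (α : ℝ → ℝ) : ℝ :=
  sInf {s : ℝ | ∃ c : ℝ, 0 < c ∧ ∀ t : ℝ, 1 ≤ t → ∀ l : ℝ, 1 ≤ l →
    α (l * t) / α t ≤ c * l ^ s}

/-- The function `α t = t^{θ + δ sin (ln ln t)}` for `t > e`, and `α t = t^θ` for
`1 ≤ t ≤ e`. -/
noncomputable def alphaSin (θ δ : ℝ) (t : ℝ) : ℝ :=
  if Real.exp 1 < t then t ^ (θ + δ * Real.sin (Real.log (Real.log t))) else t ^ θ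


open Real Set

noncomputable def Gfun (θ δ : ℝ) (u : ℝ) : ℝ :=
  θ * u + δ * Real.sin (Real.log (max u 1)) * u

lemma Gfun_of_le (θ δ : ℝ) {u : ℝ} (hu : u ≤ 1) : Gfun θ δ u = θ * u := by
  simp [Gfun, max_eq_right hu]

lemma Gfun_cont (θ δ : ℝ) : Continuous (Gfun θ δ) := by
  have h1 : Continuous fun u : ℝ => Real.log (max u 1) := by
    apply Real.continuousOn_log.comp_continuous (continuous_id.max continuous_const)
    intro x
    have h : (1:ℝ) ≤ max (id x) 1 := le_max_right _ _
    simp only [mem_compl_iff, mem_singleton_iff]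
    intro hx
    rw [hx] at h; linarith
  exact (continuous_const.mul continuous_id).add
    ((continuous_const.mul (Real.continuous_sin.comp h1)).mul continuous_id)

lemma Gfun_hasDeriv (θ δ : ℝ) {u : ℝ} (hu : 1 < u) :
    HasDerivAt (Gfun θ δ) (θ + δ * (Real.sin (Real.log u) + Real.cos (Real.log u))) u := by
  have hu0 : u ≠ 0 := by linarith
  have h1 : HasDerivAt (fun u : ℝ => Real.sin (Real.log u)) (Real.cos (Real.log u) * u⁻¹) u :=
    (Real.hasDerivAt_sin (Real.log u)).comp u (Real.hasDerivAt_log hu0)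
  have h2 : HasDerivAt (fun u : ℝ => Real.sin (Real.log u) * u)
      (Real.cos (Real.log u) * u⁻¹ * u + Real.sin (Real.log u) * 1) u :=
    h1.mul (hasDerivAt_id u)
  have hP : HasDerivAt (fun u : ℝ => θ * u + δ * (Real.sin (Real.log u) * u))
      (θ * 1 + δ * (Real.cos (Real.log u) * u⁻¹ * u + Real.sin (Real.log u) * 1)) u :=
    ((hasDerivAt_id u).const_mul θ).add (h2.const_mul δ)
  have heq : (fun u : ℝ => θ * u + δ * (Real.sin (Real.log u) * u)) =ᶠ[nhds u] Gfun θ δ := by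
    filter_upwards [Ioi_mem_nhds hu] with x hx
    simp [Gfun, max_eq_left (le_of_lt (Set.mem_Ioi.mp hx)), mul_assoc]
  have h := hP.congr_of_eventuallyEq heq.symm
  have hval : θ * 1 + δ * (Real.cos (Real.log u) * u⁻¹ * u + Real.sin (Real.log u) * 1)
      = θ + δ * (Real.sin (Real.log u) + Real.cos (Real.log u)) := by
    rw [mul_assoc (Real.cos (Real.log u)), inv_mul_cancel₀ hu0]; ring
  rwa [hval] at h

lemma sincos_le (y : ℝ) : Real.sin y + Real.cos y ≤ Real.sqrt 2 := by
  have h2 : (Real.sin y + Real.cos y)^2 ≤ 2 := by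
    have h := Real.sin_sq_add_cos_sq y
    have h' := Real.sin_le_one (2*y)
    rw [Real.sin_two_mul] at h'
    nlinarith
  have hs : Real.sqrt 2 ^ 2 = 2 := Real.sq_sqrt (by norm_num)
  nlinarith [Real.sqrt_nonneg 2, sq_nonneg (Real.sin y + Real.cos y - Real.sqrt 2)]

lemma neg_sincos_le (y : ℝ) : -Real.sqrt 2 ≤ Real.sin y + Real.cos y := by
  have h2 : (Real.sin y + Real.cos y)^2 ≤ 2 := by
    have h := Real.sin_sq_add_cos_sq y
    have h' := Real.sin_le_one (2*y)
    rw [Real.sin_two_mul] at h'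
    nlinarith
  have hs : Real.sqrt 2 ^ 2 = 2 := Real.sq_sqrt (by norm_num)
  nlinarith [Real.sqrt_nonneg 2, sq_nonneg (Real.sin y + Real.cos y + Real.sqrt 2)]

lemma Gfun_sub_le (θ δ s a b : ℝ) (hab : a ≤ b)
    (hs : ∀ x ∈ Set.Ioo a b,
      θ + δ * (Real.sin (Real.log x) + Real.cos (Real.log x)) ≤ s)
    (ha : 1 ≤ a) :
    Gfun θ δ b - Gfun θ δ a ≤ s * (b - a) := by
  rcases eq_or_lt_of_le hab with rfl | hlt
  · simp
  · obtain ⟨ξ, hξ, hξ2⟩ := exists_hasDerivAt_eq_slope (Gfun θ δ)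
      (fun x => θ + δ * (Real.sin (Real.log x) + Real.cos (Real.log x))) hlt
      ((Gfun_cont θ δ).continuousOn)
      (fun x hx => Gfun_hasDeriv θ δ (lt_of_le_of_lt ha hx.1))
    have hb : 0 < b - a := by linarith
    have := hs ξ hξ
    rw [hξ2] at this
    rw [div_le_iff₀ hb] at this
    linarith

lemma Gfun_sub_ge (θ δ s a b : ℝ) (hab : a ≤ b)
    (hs : ∀ x ∈ Set.Ioo a b,
      s ≤ θ + δ * (Real.sin (Real.log x) + Real.cos (Real.log x)))
    (ha : 1 ≤ a) :
    s * (b - a) ≤ Gfun θ δ b - Gfun θ δ a := by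
  rcases eq_or_lt_of_le hab with rfl | hlt
  · simp
  · obtain ⟨ξ, hξ, hξ2⟩ := exists_hasDerivAt_eq_slope (Gfun θ δ)
      (fun x => θ + δ * (Real.sin (Real.log x) + Real.cos (Real.log x))) hlt
      ((Gfun_cont θ δ).continuousOn)
      (fun x hx => Gfun_hasDeriv θ δ (lt_of_le_of_lt ha hx.1))
    have hb : 0 < b - a := by linarith
    have := hs ξ hξ
    rw [hξ2] at this
    rw [le_div_iff₀ hb] at this
    linarith

lemma Gfun_upper (θ δ : ℝ) (hδ : 0 < δ) {u v : ℝ} (hu : 0 ≤ u) (huv : u ≤ v) :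
    Gfun θ δ v - Gfun θ δ u ≤ (θ + Real.sqrt 2 * δ) * (v - u) := by
  have hroot : 0 ≤ Real.sqrt 2 := Real.sqrt_nonneg 2
  have key : ∀ a b : ℝ, 1 ≤ a → a ≤ b →
      Gfun θ δ b - Gfun θ δ a ≤ (θ + Real.sqrt 2 * δ) * (b - a) := by
    intro a b ha hab
    apply Gfun_sub_le θ δ _ a b hab _ ha
    intro x _
    nlinarith [sincos_le (Real.log x)]
  rcases le_or_gt v 1 with hv | hv
  · rw [Gfun_of_le θ δ hv, Gfun_of_le θ δ (le_trans huv hv)]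
    nlinarith [mul_nonneg (mul_nonneg hroot hδ.le) (sub_nonneg.2 huv)]
  · rcases le_or_gt 1 u with hu1 | hu1
    · exact key u v hu1 huv
    · have h1 := key 1 v le_rfl hv.le
      rw [Gfun_of_le θ δ hu1.le, Gfun_of_le θ δ le_rfl] at *
      nlinarith [mul_nonneg (mul_nonneg hroot hδ.le) (by linarith : (0:ℝ) ≤ 1 - u)]

lemma Gfun_lower (θ δ : ℝ) (hδ : 0 < δ) {u v : ℝ} (hu : 0 ≤ u) (huv : u ≤ v) :
    (θ - Real.sqrt 2 * δ) * (v - u) ≤ Gfun θ δ v - Gfun θ δ u := by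
  have hroot : 0 ≤ Real.sqrt 2 := Real.sqrt_nonneg 2
  have key : ∀ a b : ℝ, 1 ≤ a → a ≤ b →
      (θ - Real.sqrt 2 * δ) * (b - a) ≤ Gfun θ δ b - Gfun θ δ a := by
    intro a b ha hab
    apply Gfun_sub_ge θ δ _ a b hab _ ha
    intro x _
    nlinarith [neg_sincos_le (Real.log x)]
  rcases le_or_gt v 1 with hv | hv
  · rw [Gfun_of_le θ δ hv, Gfun_of_le θ δ (le_trans huv hv)]
    nlinarith [mul_nonneg (mul_nonneg hroot hδ.le) (sub_nonneg.2 huv)]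
  · rcases le_or_gt 1 u with hu1 | hu1
    · exact key u v hu1 huv
    · have h1 := key 1 v le_rfl hv.le
      rw [Gfun_of_le θ δ hu1.le, Gfun_of_le θ δ le_rfl] at *
      nlinarith [mul_nonneg (mul_nonneg hroot hδ.le) (by linarith : (0:ℝ) ≤ 1 - u)]

lemma alpha_eq (θ δ : ℝ) {t : ℝ} (ht : 1 ≤ t) :
    alphaSin θ δ t = Real.exp (Gfun θ δ (Real.log t)) := by
  have ht0 : 0 < t := by linarith
  unfold alphaSin
  split_ifs with h
  · have hlog : 1 < Real.log t := by
      have := Real.log_lt_log (Real.exp_pos 1) h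
      rwa [Real.log_exp] at this
    rw [Real.rpow_def_of_pos ht0]
    congr 1
    rw [Gfun, max_eq_left hlog.le]
    ring
  · have hlog : Real.log t ≤ 1 := by
      rcases le_or_gt (Real.log t) 1 with h' | h'
      · exact h'
      · exfalso
        have := Real.exp_lt_exp.2 h'
        rw [Real.exp_log ht0] at this
        exact h (by linarith [this])
    rw [Real.rpow_def_of_pos ht0, Gfun_of_le θ δ hlog]
    congr 1; ring

lemma ratio_eq (θ δ : ℝ) {t l : ℝ} (ht : 1 ≤ t) (hl : 1 ≤ l) :
    alphaSin θ δ (l * t) / alphaSin θ δ t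
      = Real.exp (Gfun θ δ (Real.log l + Real.log t) - Gfun θ δ (Real.log t)) := by
  have hlt : 1 ≤ l * t := one_le_mul_of_one_le_of_one_le hl ht
  rw [alpha_eq θ δ hlt, alpha_eq θ δ ht, ← Real.exp_sub,
    Real.log_mul (by linarith) (by linarith)]

lemma trig_neg (h : ℝ) (n : ℕ) :
    Real.sin (2*Real.pi*(n+1) - 3*Real.pi/4 + h) + Real.cos (2*Real.pi*(n+1) - 3*Real.pi/4 + h)
      = -Real.sqrt 2 * Real.cos h := by
  have e1 : 2*Real.pi*(n+1) - 3*Real.pi/4 + h = (h - 3*Real.pi/4) + ((n+1 : ℕ) : ℝ) * (2*Real.pi) := by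
    push_cast; ring
  rw [e1, Real.sin_add_nat_mul_two_pi, Real.cos_add_nat_mul_two_pi, Real.sin_sub, Real.cos_sub]
  have h34 : (3:ℝ)*Real.pi/4 = Real.pi - Real.pi/4 := by ring
  rw [h34, Real.sin_pi_sub, Real.cos_pi_sub, Real.sin_pi_div_four, Real.cos_pi_div_four]
  ring

lemma trig_pos (h : ℝ) (n : ℕ) :
    Real.sin (2*Real.pi*(n+1) + Real.pi/4 + h) + Real.cos (2*Real.pi*(n+1) + Real.pi/4 + h)
      = Real.sqrt 2 * Real.cos h := by
  have e1 : 2*Real.pi*(n+1) + Real.pi/4 + h = (h + Real.pi/4) + ((n+1 : ℕ) : ℝ) * (2*Real.pi) := by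
    push_cast; ring
  rw [e1, Real.sin_add_nat_mul_two_pi, Real.cos_add_nat_mul_two_pi, Real.sin_add, Real.cos_add,
    Real.sin_pi_div_four, Real.cos_pi_div_four]
  ring

lemma exists_r (q : ℝ) (hq : q < 1) : ∃ r, 0 < r ∧ r ≤ Real.pi ∧ q < Real.cos r := by
  set C := max (1/2 : ℝ) ((1+q)/2) with hCdef
  have hC1 : C ≤ 1 := max_le (by norm_num) (by linarith)
  have hClt1 : C < 1 := max_lt (by norm_num) (by linarith)
  have hCm1 : (-1:ℝ) ≤ C := le_trans (by norm_num) (le_max_left _ _)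
  have hCq : q < C := lt_of_lt_of_le (by linarith) (le_max_right _ _)
  exact ⟨Real.arccos C, Real.arccos_pos.2 hClt1, Real.arccos_le_pi C,
    by rw [Real.cos_arccos hCm1 hC1]; exact hCq⟩

lemma exp_sub_exp (m r : ℝ) :
    Real.exp (m + r) - Real.exp (m - r) = Real.exp m * (Real.exp r - Real.exp (-r)) := by
  rw [Real.exp_add, sub_eq_add_neg m r, Real.exp_add]; ring

set_option maxHeartbeats 2000000 in
lemma sigma0_ub (θ δ : ℝ) (hδ : 0 < δ) (s c : ℝ) (hc : 0 < c)
    (H : ∀ t : ℝ, 1 ≤ t → ∀ l : ℝ, 1 ≤ l →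
      c * l ^ s ≤ alphaSin θ δ (l * t) / alphaSin θ δ t) :
    s ≤ θ - Real.sqrt 2 * δ := by
  by_contra hcon
  push_neg at hcon
  have hroot : (0:ℝ) < Real.sqrt 2 := by positivity
  have h2δ : 0 < Real.sqrt 2 * δ := mul_pos hroot hδ
  have hq : (θ - s) / (Real.sqrt 2 * δ) < 1 := (div_lt_one h2δ).2 (by linarith)
  obtain ⟨r, hr0, hrπ, hqr⟩ := exists_r _ hq
  have hθs : θ - s < Real.cos r * (Real.sqrt 2 * δ) := (div_lt_iff₀ h2δ).1 hqr
  set ε := s - (θ - Real.sqrt 2 * δ * Real.cos r) with hεdef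
  have hε : 0 < ε := by simp only [hεdef]; nlinarith
  set w := Real.exp r - Real.exp (-r) with hwdef
  have hw : 0 < w := by
    have : Real.exp (-r) < Real.exp r := Real.exp_lt_exp.2 (by linarith)
    simp only [hwdef]; linarith
  obtain ⟨n, hn⟩ := exists_nat_gt ((-Real.log c) / (ε * w))
  set m := 2 * Real.pi * (n + 1) - 3 * Real.pi / 4 with hmdef
  have hπ3 := Real.pi_gt_three
  have hn0 : (0:ℝ) ≤ (n:ℝ) := n.cast_nonneg
  have hmr : 0 ≤ m - r := by simp only [hmdef]; nlinarith
  set a := Real.exp (m - r) with hadef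
  set b := Real.exp (m + r) with hbdef
  have ha1 : 1 ≤ a := Real.one_le_exp hmr
  have hab : a ≤ b := Real.exp_le_exp.2 (by linarith)
  -- the derivative bound on (a,b)
  have hderiv : ∀ x ∈ Set.Ioo a b,
      θ + δ * (Real.sin (Real.log x) + Real.cos (Real.log x))
        ≤ θ - Real.sqrt 2 * δ * Real.cos r := by
    intro x hx
    have hx0 : 0 < x := lt_of_lt_of_le (by linarith : (0:ℝ) < a) hx.1.le
    have hlx1 : m - r < Real.log x := by
      have := Real.log_lt_log (Real.exp_pos _) hx.1
      rwa [Real.log_exp] at this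
    have hlx2 : Real.log x < m + r := by
      have := Real.log_lt_log hx0 hx.2
      rwa [Real.log_exp] at this
    set h' := Real.log x - m with hh'def
    have hlx : Real.log x = 2 * Real.pi * (n + 1) - 3 * Real.pi / 4 + h' := by
      simp only [hh'def, hmdef]; ring
    have htrig : Real.sin (Real.log x) + Real.cos (Real.log x)
        = -Real.sqrt 2 * Real.cos h' := by rw [hlx]; exact trig_neg h' n
    have habs : |h'| ≤ r := abs_le.2 ⟨by simp only [hh'def]; linarith, by simp only [hh'def]; linarith⟩
    have hcos : Real.cos r ≤ Real.cos h' := by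
      rw [← Real.cos_abs h']
      exact Real.cos_le_cos_of_nonneg_of_le_pi (abs_nonneg _) hrπ habs
    rw [htrig]
    nlinarith
  have hGle := Gfun_sub_le θ δ (θ - Real.sqrt 2 * δ * Real.cos r) a b hab hderiv ha1
  -- apply hypothesis at t = exp a, l = exp (b - a)
  have ht1 : (1:ℝ) ≤ Real.exp a := Real.one_le_exp (by linarith)
  have hl1 : (1:ℝ) ≤ Real.exp (b - a) := Real.one_le_exp (by linarith)
  have hH := H (Real.exp a) ht1 (Real.exp (b - a)) hl1
  rw [ratio_eq θ δ ht1 hl1, Real.log_exp, Real.log_exp] at hH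
  have hba : b - a + a = b := by ring
  rw [hba] at hH
  have hrpow : Real.exp (b - a) ^ s = Real.exp ((b - a) * s) := by
    rw [Real.rpow_def_of_pos (Real.exp_pos _), Real.log_exp]
  rw [hrpow] at hH
  have hle : c * Real.exp ((b - a) * s)
      ≤ Real.exp ((θ - Real.sqrt 2 * δ * Real.cos r) * (b - a)) :=
    le_trans hH (by exact Real.exp_le_exp.2 hGle)
  have hc2 : c ≤ Real.exp (-(ε * (b - a))) := by
    have h1 : c * Real.exp ((b - a) * s)
        ≤ Real.exp (-(ε * (b - a))) * Real.exp ((b - a) * s) := by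
      rw [← Real.exp_add]
      calc c * Real.exp ((b - a) * s)
          ≤ Real.exp ((θ - Real.sqrt 2 * δ * Real.cos r) * (b - a)) := hle
        _ = Real.exp (-(ε * (b - a)) + (b - a) * s) := by
            congr 1; simp only [hεdef]; ring
    exact le_of_mul_le_mul_right h1 (Real.exp_pos _)
  have hm_exp : (n:ℝ) < Real.exp m := by
    have h1 := Real.add_one_le_exp m
    have h2 : (n:ℝ) < m + 1 := by simp only [hmdef]; nlinarith
    linarith
  have hba_eq : b - a = Real.exp m * w := by
    rw [hbdef, hadef, hwdef]; exact exp_sub_exp m r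
  have hnw : -Real.log c < (n:ℝ) * (ε * w) := by
    have := (div_lt_iff₀ (mul_pos hε hw)).1 hn
    linarith
  have hbig : -Real.log c < ε * (b - a) := by
    rw [hba_eq]
    have h2 : (n:ℝ) * (ε * w) ≤ Real.exp m * (ε * w) := by
      apply mul_le_mul_of_nonneg_right hm_exp.le (by positivity)
    calc -Real.log c < (n:ℝ) * (ε * w) := hnw
      _ ≤ Real.exp m * (ε * w) := h2
      _ = ε * (Real.exp m * w) := by ring
  have hlast : Real.exp (-(ε * (b - a))) < c := by
    rw [← Real.exp_log hc]
    exact Real.exp_lt_exp.2 (by linarith)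
  linarith

set_option maxHeartbeats 2000000 in
lemma sigma1_lb (θ δ : ℝ) (hδ : 0 < δ) (s c : ℝ) (hc : 0 < c)
    (H : ∀ t : ℝ, 1 ≤ t → ∀ l : ℝ, 1 ≤ l →
      alphaSin θ δ (l * t) / alphaSin θ δ t ≤ c * l ^ s) :
    θ + Real.sqrt 2 * δ ≤ s := by
  by_contra hcon
  push_neg at hcon
  have hroot : (0:ℝ) < Real.sqrt 2 := by positivity
  have h2δ : 0 < Real.sqrt 2 * δ := mul_pos hroot hδ
  have hq : (s - θ) / (Real.sqrt 2 * δ) < 1 := (div_lt_one h2δ).2 (by linarith)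
  obtain ⟨r, hr0, hrπ, hqr⟩ := exists_r _ hq
  have hθs : s - θ < Real.cos r * (Real.sqrt 2 * δ) := (div_lt_iff₀ h2δ).1 hqr
  set ε := (θ + Real.sqrt 2 * δ * Real.cos r) - s with hεdef
  have hε : 0 < ε := by simp only [hεdef]; nlinarith
  set w := Real.exp r - Real.exp (-r) with hwdef
  have hw : 0 < w := by
    have : Real.exp (-r) < Real.exp r := Real.exp_lt_exp.2 (by linarith)
    simp only [hwdef]; linarith
  obtain ⟨n, hn⟩ := exists_nat_gt ((Real.log c) / (ε * w))
  set m := 2 * Real.pi * (n + 1) + Real.pi / 4 with hmdef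
  have hπ3 := Real.pi_gt_three
  have hn0 : (0:ℝ) ≤ (n:ℝ) := n.cast_nonneg
  have hmr : 0 ≤ m - r := by simp only [hmdef]; nlinarith
  set a := Real.exp (m - r) with hadef
  set b := Real.exp (m + r) with hbdef
  have ha1 : 1 ≤ a := Real.one_le_exp hmr
  have hab : a ≤ b := Real.exp_le_exp.2 (by linarith)
  have hderiv : ∀ x ∈ Set.Ioo a b,
      θ + Real.sqrt 2 * δ * Real.cos r
        ≤ θ + δ * (Real.sin (Real.log x) + Real.cos (Real.log x)) := by
    intro x hx
    have hx0 : 0 < x := lt_of_lt_of_le (by linarith : (0:ℝ) < a) hx.1.le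
    have hlx1 : m - r < Real.log x := by
      have := Real.log_lt_log (Real.exp_pos _) hx.1
      rwa [Real.log_exp] at this
    have hlx2 : Real.log x < m + r := by
      have := Real.log_lt_log hx0 hx.2
      rwa [Real.log_exp] at this
    set h' := Real.log x - m with hh'def
    have hlx : Real.log x = 2 * Real.pi * (n + 1) + Real.pi / 4 + h' := by
      simp only [hh'def, hmdef]; ring
    have htrig : Real.sin (Real.log x) + Real.cos (Real.log x)
        = Real.sqrt 2 * Real.cos h' := by rw [hlx]; exact trig_pos h' n
    have habs : |h'| ≤ r := abs_le.2 ⟨by simp only [hh'def]; linarith, by simp only [hh'def]; linarith⟩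
    have hcos : Real.cos r ≤ Real.cos h' := by
      rw [← Real.cos_abs h']
      exact Real.cos_le_cos_of_nonneg_of_le_pi (abs_nonneg _) hrπ habs
    rw [htrig]
    nlinarith
  have hGge := Gfun_sub_ge θ δ (θ + Real.sqrt 2 * δ * Real.cos r) a b hab hderiv ha1
  have ht1 : (1:ℝ) ≤ Real.exp a := Real.one_le_exp (by linarith)
  have hl1 : (1:ℝ) ≤ Real.exp (b - a) := Real.one_le_exp (by linarith)
  have hH := H (Real.exp a) ht1 (Real.exp (b - a)) hl1
  rw [ratio_eq θ δ ht1 hl1, Real.log_exp, Real.log_exp] at hH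
  have hba : b - a + a = b := by ring
  rw [hba] at hH
  have hrpow : Real.exp (b - a) ^ s = Real.exp ((b - a) * s) := by
    rw [Real.rpow_def_of_pos (Real.exp_pos _), Real.log_exp]
  rw [hrpow] at hH
  have hle : Real.exp ((θ + Real.sqrt 2 * δ * Real.cos r) * (b - a))
      ≤ c * Real.exp ((b - a) * s) :=
    le_trans (Real.exp_le_exp.2 (by linarith)) hH
  have hc2 : Real.exp (ε * (b - a)) ≤ c := by
    have h1 : Real.exp (ε * (b - a)) * Real.exp ((b - a) * s)
        ≤ c * Real.exp ((b - a) * s) := by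
      rw [← Real.exp_add]
      calc Real.exp (ε * (b - a) + (b - a) * s)
          = Real.exp ((θ + Real.sqrt 2 * δ * Real.cos r) * (b - a)) := by
            congr 1; simp only [hεdef]; ring
        _ ≤ c * Real.exp ((b - a) * s) := hle
    exact le_of_mul_le_mul_right h1 (Real.exp_pos _)
  have hm_exp : (n:ℝ) < Real.exp m := by
    have h1 := Real.add_one_le_exp m
    have h2 : (n:ℝ) < m + 1 := by simp only [hmdef]; nlinarith
    linarith
  have hba_eq : b - a = Real.exp m * w := by
    rw [hbdef, hadef, hwdef]; exact exp_sub_exp m r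
  have hnw : Real.log c < (n:ℝ) * (ε * w) := by
    have := (div_lt_iff₀ (mul_pos hε hw)).1 hn
    linarith
  have hbig : Real.log c < ε * (b - a) := by
    rw [hba_eq]
    have h2 : (n:ℝ) * (ε * w) ≤ Real.exp m * (ε * w) := by
      apply mul_le_mul_of_nonneg_right hm_exp.le (by positivity)
    calc Real.log c < (n:ℝ) * (ε * w) := hnw
      _ ≤ Real.exp m * (ε * w) := h2
      _ = ε * (Real.exp m * w) := by ring
  have hlast : c < Real.exp (ε * (b - a)) := by
    rw [← Real.exp_log hc]
    exact Real.exp_lt_exp.2 (by linarith)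
  linarith

/-- The function `t^{θ + δ sin(ln ln t)}` belongs to RO with Matuszewska indices
`σ₀ = θ - √2 δ` and `σ₁ = θ + √2 δ`. -/
theorem stmt7 (θ δ : ℝ) (hδ : 0 < δ) :
    IsRO (alphaSin θ δ) ∧
      sigma0 (alphaSin θ δ) = θ - Real.sqrt 2 * δ ∧
      sigma1 (alphaSin θ δ) = θ + Real.sqrt 2 * δ := by
  have hroot : (0:ℝ) < Real.sqrt 2 := by positivity
  have hA : (0:ℝ) < |θ| + Real.sqrt 2 * δ := by positivity
  -- the two membership facts
  have hmem0 : ∀ t : ℝ, 1 ≤ t → ∀ l : ℝ, 1 ≤ l →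
      (1:ℝ) * l ^ (θ - Real.sqrt 2 * δ) ≤ alphaSin θ δ (l * t) / alphaSin θ δ t := by
    intro t ht l hl
    rw [ratio_eq θ δ ht hl, one_mul,
      Real.rpow_def_of_pos (by linarith : (0:ℝ) < l)]
    apply Real.exp_le_exp.2
    have h := Gfun_lower θ δ hδ (Real.log_nonneg ht)
      (by linarith [Real.log_nonneg hl] : Real.log t ≤ Real.log l + Real.log t)
    calc Real.log l * (θ - Real.sqrt 2 * δ)
        = (θ - Real.sqrt 2 * δ) * (Real.log l + Real.log t - Real.log t) := by ring
      _ ≤ _ := h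
  have hmem1 : ∀ t : ℝ, 1 ≤ t → ∀ l : ℝ, 1 ≤ l →
      alphaSin θ δ (l * t) / alphaSin θ δ t ≤ (1:ℝ) * l ^ (θ + Real.sqrt 2 * δ) := by
    intro t ht l hl
    rw [ratio_eq θ δ ht hl, one_mul,
      Real.rpow_def_of_pos (by linarith : (0:ℝ) < l)]
    apply Real.exp_le_exp.2
    have h := Gfun_upper θ δ hδ (Real.log_nonneg ht)
      (by linarith [Real.log_nonneg hl] : Real.log t ≤ Real.log l + Real.log t)
    calc Gfun θ δ (Real.log l + Real.log t) - Gfun θ δ (Real.log t)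
        ≤ (θ + Real.sqrt 2 * δ) * (Real.log l + Real.log t - Real.log t) := h
      _ = Real.log l * (θ + Real.sqrt 2 * δ) := by ring
  refine ⟨⟨?_, ?_, ?_⟩, ?_, ?_⟩
  · -- measurability
    have heq : (fun t : Set.Ici (1:ℝ) => alphaSin θ δ t.1)
        = fun t : Set.Ici (1:ℝ) => Real.exp (Gfun θ δ (Real.log t.1)) :=
      funext fun t => alpha_eq θ δ t.2
    rw [heq]
    exact Real.measurable_exp.comp ((Gfun_cont θ δ).measurable.comp
      (Real.measurable_log.comp measurable_subtype_coe))
  · -- positivity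
    intro t ht
    rw [alpha_eq θ δ ht]
    exact Real.exp_pos _
  · -- RO bounds with b = 2
    refine ⟨2, one_lt_two, Real.exp (|θ| + Real.sqrt 2 * δ), Real.one_le_exp hA.le, ?_⟩
    intro t ht l hl hl2
    have hlogl0 : 0 ≤ Real.log l := Real.log_nonneg hl
    have hlogl1 : Real.log l ≤ 1 := by
      have h2 : Real.log l ≤ Real.log 2 :=
        Real.log_le_log (by linarith) hl2
      have := Real.log_two_lt_d9
      linarith
    rw [ratio_eq θ δ ht hl]
    have hlow := Gfun_lower θ δ hδ (Real.log_nonneg ht)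
      (by linarith : Real.log t ≤ Real.log l + Real.log t)
    have hup := Gfun_upper θ δ hδ (Real.log_nonneg ht)
      (by linarith : Real.log t ≤ Real.log l + Real.log t)
    have habs1 : -(|θ| + Real.sqrt 2 * δ) ≤ (θ - Real.sqrt 2 * δ) * Real.log l := by
      rcases le_or_gt 0 (θ - Real.sqrt 2 * δ) with h | h
      · nlinarith
      · nlinarith [neg_abs_le θ]
    have habs2 : (θ + Real.sqrt 2 * δ) * Real.log l ≤ |θ| + Real.sqrt 2 * δ := by
      rcases le_or_gt 0 (θ + Real.sqrt 2 * δ) with h | h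
      · nlinarith [le_abs_self θ]
      · nlinarith
    constructor
    · rw [← Real.exp_neg]
      apply Real.exp_le_exp.2
      have : (θ - Real.sqrt 2 * δ) * (Real.log l + Real.log t - Real.log t)
          = (θ - Real.sqrt 2 * δ) * Real.log l := by ring
      rw [this] at hlow
      linarith
    · apply Real.exp_le_exp.2
      have : (θ + Real.sqrt 2 * δ) * (Real.log l + Real.log t - Real.log t)
          = (θ + Real.sqrt 2 * δ) * Real.log l := by ring
      rw [this] at hup
      linarith
  · -- sigma0
    have hmem : (θ - Real.sqrt 2 * δ) ∈ {s : ℝ | ∃ c : ℝ, 0 < c ∧ ∀ t : ℝ, 1 ≤ t →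
        ∀ l : ℝ, 1 ≤ l → c * l ^ s ≤ alphaSin θ δ (l * t) / alphaSin θ δ t} :=
      ⟨1, one_pos, hmem0⟩
    have hub : ∀ s ∈ {s : ℝ | ∃ c : ℝ, 0 < c ∧ ∀ t : ℝ, 1 ≤ t →
        ∀ l : ℝ, 1 ≤ l → c * l ^ s ≤ alphaSin θ δ (l * t) / alphaSin θ δ t},
        s ≤ θ - Real.sqrt 2 * δ := by
      rintro s ⟨c, hc, H⟩
      exact sigma0_ub θ δ hδ s c hc H
    exact le_antisymm (csSup_le ⟨_, hmem⟩ hub) (le_csSup ⟨_, hub⟩ hmem)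
  · -- sigma1
    have hmem : (θ + Real.sqrt 2 * δ) ∈ {s : ℝ | ∃ c : ℝ, 0 < c ∧ ∀ t : ℝ, 1 ≤ t →
        ∀ l : ℝ, 1 ≤ l → alphaSin θ δ (l * t) / alphaSin θ δ t ≤ c * l ^ s} :=
      ⟨1, one_pos, hmem1⟩
    have hlb : ∀ s ∈ {s : ℝ | ∃ c : ℝ, 0 < c ∧ ∀ t : ℝ, 1 ≤ t →
        ∀ l : ℝ, 1 ≤ l → alphaSin θ δ (l * t) / alphaSin θ δ t ≤ c * l ^ s},
        θ + Real.sqrt 2 * δ ≤ s := by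
      rintro s ⟨c, hc, H⟩
      exact sigma1_lb θ δ hδ s c hc H
    exact le_antisymm (csInf_le ⟨_, hlb⟩ hmem) (le_csInf ⟨_, hmem⟩ hlb)
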